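/- Let c, τ ∈ ℝ with 1 + cτ ≠ 0 and 1 − c²τ ≠ 0. Suppose ũ : ℝ → ℝ is twice differentiable, ṽ : ℝ → ℝ is differentiable, and for all ξ ∈ ℝ they satisfy ũ′(ξ)·(1 + cτ(ũ(ξ) − c)) = ṽ(ξ) and ṽ′(ξ) = (c − ũ(ξ)/2)·ũ(ξ)/(1 + cτ). Then for all ξ ∈ ℝ: −ũ″(ξ) + (c/((1 + cτ)(1 − c²τ)))·ũ(ξ) = (1/((1 + cτ)(1 − c²τ)))·ũ(ξ)²/2 + (cτ/(1 − c²τ))·(ũ(ξ)·ũ′(ξ))′, where (ũ·ũ′)′ = ũ′² + ũ·ũ″. -/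

import Mathlib

/-- Solutions of the first-order KdVH traveling-wave system satisfy the second-order
equation `−ũ″ + (c/((1+cτ)(1−c²τ)))ũ = (1/((1+cτ)(1−c²τ)))ũ²/2 + (cτ/(1−c²τ))(ũũ′)′`. -/
theorem kdvh_second_order_tw (c τ : ℝ) (h1 : 1 + c * τ ≠ 0) (h2 : 1 - c ^ 2 * τ ≠ 0)
    (u v : ℝ → ℝ) (hu : Differentiable ℝ u) (hu' : Differentiable ℝ (deriv u))
    (hv : Differentiable ℝ v)
    (e1 : ∀ ξ : ℝ, deriv u ξ * (1 + c * τ * (u ξ - c)) = v ξ)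
    (e2 : ∀ ξ : ℝ, deriv v ξ = (c - u ξ / 2) * u ξ / (1 + c * τ)) :
    ∀ ξ : ℝ,
      -deriv (deriv u) ξ + c / ((1 + c * τ) * (1 - c ^ 2 * τ)) * u ξ =
        1 / ((1 + c * τ) * (1 - c ^ 2 * τ)) * ((u ξ) ^ 2 / 2) +
        c * τ / (1 - c ^ 2 * τ) * ((deriv u ξ) ^ 2 + u ξ * deriv (deriv u) ξ) := by
  intro ξ
  have hfun : (fun ξ => deriv u ξ * (1 + c * τ * (u ξ - c))) = v := funext e1
  have hd : HasDerivAt (fun ξ => deriv u ξ * (1 + c * τ * (u ξ - c)))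
      (deriv (deriv u) ξ * (1 + c * τ * (u ξ - c)) +
        deriv u ξ * (c * τ * deriv u ξ)) ξ := by
    have h1' : HasDerivAt (deriv u) (deriv (deriv u) ξ) ξ := (hu' ξ).hasDerivAt
    have h2' : HasDerivAt (fun ξ => 1 + c * τ * (u ξ - c)) (c * τ * deriv u ξ) ξ := by
      have : HasDerivAt u (deriv u ξ) ξ := (hu ξ).hasDerivAt
      simpa using ((this.sub_const c).const_mul (c * τ)).const_add 1
    exact h1'.mul h2'
  have key : deriv (deriv u) ξ * (1 + c * τ * (u ξ - c)) + deriv u ξ * (c * τ * deriv u ξ)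
      = (c - u ξ / 2) * u ξ / (1 + c * τ) := by
    rw [← hd.deriv, hfun, e2]
  have key2 : (deriv (deriv u) ξ * (1 + c * τ * (u ξ - c)) + deriv u ξ * (c * τ * deriv u ξ))
      * (1 + c * τ) = (c - u ξ / 2) * u ξ := by
    field_simp at key
    linarith [key]
  field_simp
  linear_combination (-2) * key2
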